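/- Fix an integer n ≥ 0 and a real c ≥ 0. Then the map z ↦ φ_n(z;c) is complex differentiable (analytic) on the open right half-plane {z ∈ ℂ : Re z > 0}, and for every z with Re z > 0, φ_n(z;c) = (2^{(n+1)/2} · z^{n/2} / √π) · Hh_n(c/√(2z)), where z^{n/2} and √(2z) are taken with the principal branch of the square root. -/

import Mathlib

open MeasureTheory Set Complex Filter Metric Topology

/-- `φ_n(z;c) = z^{-3/2}/(2√π (n+1)!) ∫_c^∞ e^{-τ²/(4z)} τ (τ-c)^{n+1} dτ` for complex `z`
(principal branch of `z^{-3/2}`). -/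
noncomputable def phiC (n : ℕ) (c : ℝ) (z : ℂ) : ℂ :=
  z ^ (-(3 : ℂ) / 2) / (2 * (Real.sqrt Real.pi : ℂ) * (Nat.factorial (n + 1) : ℂ)) *
    ∫ τ in Set.Ioi c, Complex.exp (-(τ : ℂ) ^ 2 / (4 * z)) * (τ : ℂ) * ((τ : ℂ) - (c : ℂ)) ^ (n + 1)

/-- `Hh_n(w) = (1/n!) ∫_0^∞ e^{-(s+w)²/2} s^n ds`. -/
noncomputable def Hh (n : ℕ) (w : ℂ) : ℂ :=
  (1 / (Nat.factorial n : ℂ)) *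
    ∫ s in Set.Ioi (0 : ℝ), Complex.exp (-((s : ℂ) + w) ^ 2 / 2) * (s : ℂ) ^ n

lemma gaussInt (k : ℕ) {b : ℝ} (hb : 0 < b) :
    IntegrableOn (fun s : ℝ => s ^ k * Real.exp (-b * s ^ 2)) (Ioi 0) := by
  have h := integrableOn_rpow_mul_exp_neg_mul_sq hb (s := (k : ℝ))
    (lt_of_lt_of_le neg_one_lt_zero (Nat.cast_nonneg k))
  exact h.congr_fun (fun x hx => by simp only [Real.rpow_natCast]) measurableSet_Ioi

lemma norm_gauss_exp {z : ℂ} (hz : z ≠ 0) (τ : ℝ) :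
    ‖Complex.exp (-(τ:ℂ)^2/(4*z))‖ = Real.exp (-(z.re / (4 * Complex.normSq z)) * τ^2) := by
  rw [Complex.norm_exp]
  congr 1
  have h : -(τ:ℂ)^2/(4*z) = ((-(τ^2) / 4 : ℝ) : ℂ) * z⁻¹ := by
    push_cast
    field_simp
  rw [h, Complex.re_ofReal_mul, Complex.inv_re]
  ring

lemma ball_re {z₀ : ℂ} (hz : 0 < z₀.re) {z : ℂ} (hb : z ∈ ball z₀ (z₀.re/2)) :
    z₀.re/2 < z.re := by
  have h1 : |(z - z₀).re| ≤ ‖z - z₀‖ := Complex.abs_re_le_norm _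
  have h2 : ‖z - z₀‖ < z₀.re/2 := by rwa [mem_ball, Complex.dist_eq] at hb
  have h3 := (abs_lt.1 (lt_of_le_of_lt h1 h2)).1
  simp only [Complex.sub_re] at h3
  linarith

lemma ball_normSq {z₀ : ℂ} (hz : 0 < z₀.re) {z : ℂ} (hb : z ∈ ball z₀ (z₀.re/2)) :
    Complex.normSq z ≤ (‖z₀‖ + z₀.re/2)^2 := by
  have h2 : ‖z - z₀‖ < z₀.re/2 := by rwa [mem_ball, Complex.dist_eq] at hb
  have h3 : ‖z‖ ≤ ‖z₀‖ + z₀.re/2 := by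
    have := norm_add_le z₀ (z - z₀)
    simp only [add_sub_cancel] at this
    linarith
  rw [Complex.normSq_eq_norm_sq]
  exact pow_le_pow_left₀ (norm_nonneg _) h3 2

lemma hasDerivAt_phi_integrand (n : ℕ) (c : ℝ) (τ : ℝ) {z : ℂ} (hz : z ≠ 0) :
    HasDerivAt (fun z : ℂ => Complex.exp (-(τ:ℂ)^2/(4*z)) * τ * ((τ:ℂ)-c)^(n+1))
      (Complex.exp (-(τ:ℂ)^2/(4*z)) * ((τ:ℂ)^2/(4*z^2)) * τ * ((τ:ℂ)-c)^(n+1)) z := by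
  have h1 : HasDerivAt (fun z : ℂ => -(τ:ℂ)^2/(4*z)) ((τ:ℂ)^2/(4*z^2)) z := by
    have he : (fun z : ℂ => -(τ:ℂ)^2/(4*z)) = fun z => (-(τ:ℂ)^2/4) * z⁻¹ := by
      funext w; ring
    rw [he]
    have h := (hasDerivAt_inv hz).const_mul (-(τ:ℂ)^2/4)
    refine h.congr_deriv ?_
    field_simp
  have hfun : (fun z : ℂ => Complex.exp (-(τ:ℂ)^2/(4*z)) * τ * ((τ:ℂ)-c)^(n+1))
      = fun z : ℂ => Complex.exp (-(τ:ℂ)^2/(4*z)) * ((τ:ℂ) * ((τ:ℂ)-c)^(n+1)) := by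
    funext w; ring
  rw [hfun]
  have h2 := h1.cexp.mul_const ((τ:ℂ) * ((τ:ℂ)-c)^(n+1))
  refine h2.congr_deriv ?_
  ring

lemma phi_cont (n : ℕ) (c : ℝ) (z : ℂ) :
    Continuous (fun τ : ℝ => Complex.exp (-(τ:ℂ)^2/(4*z)) * τ * ((τ:ℂ)-c)^(n+1)) := by
  fun_prop

lemma phi_integrand_integrable (n : ℕ) (c : ℝ) (hc : 0 ≤ c) {z : ℂ} (hz : 0 < z.re) :
    IntegrableOn (fun τ : ℝ => Complex.exp (-(τ:ℂ)^2/(4*z)) * τ * ((τ:ℂ)-c)^(n+1)) (Ioi c) := by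
  have hz0 : z ≠ 0 := fun h => by simp [h] at hz
  have hns : 0 < Complex.normSq z := Complex.normSq_pos.2 hz0
  have hb : 0 < z.re / (4 * Complex.normSq z) := by positivity
  refine ((gaussInt (n+2) hb).mono_set (Ioi_subset_Ioi hc)).mono'
    ((phi_cont n c z).aestronglyMeasurable) ?_
  filter_upwards [ae_restrict_mem measurableSet_Ioi] with τ hτ
  have hτ0 : 0 ≤ τ := le_trans hc (le_of_lt hτ)
  have hτc : 0 ≤ τ - c := by simp at hτ; linarith
  rw [norm_mul, norm_mul, norm_gauss_exp hz0, norm_pow]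
  have h1 : ‖(τ:ℂ)‖ = τ := by rw [Complex.norm_real, Real.norm_of_nonneg hτ0]
  have h2 : ‖(τ:ℂ) - (c:ℂ)‖ = τ - c := by
    rw [← Complex.ofReal_sub, Complex.norm_real, Real.norm_of_nonneg hτc]
  rw [h1, h2]
  calc Real.exp (-(z.re / (4 * Complex.normSq z)) * τ^2) * τ * (τ - c)^(n+1)
      ≤ Real.exp (-(z.re / (4 * Complex.normSq z)) * τ^2) * τ * τ^(n+1) := by
        gcongr; linarith
    _ = τ^(n+2) * Real.exp (-(z.re / (4 * Complex.normSq z)) * τ^2) := by ring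

lemma diffAt_phi_int (n : ℕ) (c : ℝ) (hc : 0 ≤ c) {z₀ : ℂ} (hz : 0 < z₀.re) :
    HasDerivAt (fun z : ℂ => ∫ τ in Ioi c, Complex.exp (-(τ:ℂ)^2/(4*z)) * τ * ((τ:ℂ)-c)^(n+1))
      (∫ τ in Ioi c, Complex.exp (-(τ:ℂ)^2/(4*z₀)) * ((τ:ℂ)^2/(4*z₀^2)) * τ * ((τ:ℂ)-c)^(n+1))
      z₀ := by
  have hε0 : 0 < z₀.re / 2 := by positivity
  set ε := z₀.re / 2 with hεdef
  set R := ‖z₀‖ + ε with hRdef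
  have hR0 : 0 < R := lt_of_lt_of_le hε0 (le_add_of_nonneg_left (norm_nonneg _))
  set δ := ε / (4 * R^2) with hδdef
  have hδ0 : 0 < δ := by positivity
  have key : ∀ z ∈ ball z₀ ε, 0 < z.re ∧ z ≠ 0 ∧ δ ≤ z.re / (4 * Complex.normSq z)
      ∧ ε^2 ≤ Complex.normSq z := by
    intro z hb
    have h1 : ε < z.re := ball_re hz hb
    have h2 : Complex.normSq z ≤ R^2 := ball_normSq hz hb
    have h3 : 0 < z.re := lt_trans hε0 h1
    have h4 : z ≠ 0 := fun h => by simp [h] at h3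
    have hre2 : z.re^2 ≤ Complex.normSq z := by
      rw [Complex.normSq_apply]; nlinarith [sq_nonneg z.im]
    have h5 : ε^2 ≤ Complex.normSq z := le_trans (by nlinarith) hre2
    have hns0 : 0 < Complex.normSq z := Complex.normSq_pos.2 h4
    exact ⟨h3, h4, div_le_div₀ h3.le h1.le (by positivity) (by nlinarith), h5⟩
  have main := hasDerivAt_integral_of_dominated_loc_of_deriv_le (μ := volume.restrict (Ioi c))
    (F := fun z τ => Complex.exp (-(τ:ℂ)^2/(4*z)) * τ * ((τ:ℂ)-c)^(n+1))
    (F' := fun z τ => Complex.exp (-(τ:ℂ)^2/(4*z)) * ((τ:ℂ)^2/(4*z^2)) * τ * ((τ:ℂ)-c)^(n+1))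
    (bound := fun τ => (1/(4*ε^2)) * (τ^(n+4) * Real.exp (-δ * τ^2)))
    (ball_mem_nhds z₀ hε0)
    (Eventually.of_forall fun z => (phi_cont n c z).aestronglyMeasurable)
    (phi_integrand_integrable n c hc hz)
    (by
      apply Continuous.aestronglyMeasurable
      fun_prop)
    ?_ ?_ ?_
  · exact main.2
  · -- bound
    filter_upwards [ae_restrict_mem measurableSet_Ioi] with τ hτ
    intro z hb
    obtain ⟨h3, h4, h5, h6⟩ := key z hb
    have hns0 : 0 < Complex.normSq z := Complex.normSq_pos.2 h4
    have hτ0 : 0 ≤ τ := le_trans hc (le_of_lt hτ)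
    have hτc : 0 ≤ τ - c := by simp at hτ; linarith
    have hnorm : ‖Complex.exp (-(τ:ℂ)^2/(4*z)) * ((τ:ℂ)^2/(4*z^2)) * τ * ((τ:ℂ)-c)^(n+1)‖
        = Real.exp (-(z.re / (4 * Complex.normSq z)) * τ^2)
          * (τ^2 / (4 * Complex.normSq z)) * τ * (τ-c)^(n+1) := by
      rw [norm_mul, norm_mul, norm_mul, norm_gauss_exp h4, norm_pow]
      congr 2
      · rw [norm_div, norm_pow, norm_mul, norm_pow, Complex.norm_real,
          Real.norm_of_nonneg hτ0, ← Complex.sq_norm]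
        norm_num
      · rw [Complex.norm_real, Real.norm_of_nonneg hτ0]
      · rw [← Complex.ofReal_sub, Complex.norm_real, Real.norm_of_nonneg hτc]
    rw [hnorm]
    calc Real.exp (-(z.re / (4 * Complex.normSq z)) * τ^2)
          * (τ^2 / (4 * Complex.normSq z)) * τ * (τ-c)^(n+1)
        ≤ Real.exp (-δ * τ^2) * (τ^2 / (4 * ε^2)) * τ * τ^(n+1) := by
          gcongr <;> first
            | nlinarith [sq_nonneg τ]
            | linarith
            | positivity
      _ = (1/(4*ε^2)) * (τ^(n+4) * Real.exp (-δ * τ^2)) := by ring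
  · exact ((gaussInt (n+4) hδ0).mono_set (Ioi_subset_Ioi hc)).const_mul _
  · filter_upwards with τ
    intro z hb
    exact hasDerivAt_phi_integrand n c τ (key z hb).2.1

lemma norm_hh_exp (s : ℝ) (w : ℂ) :
    ‖Complex.exp (-((s:ℂ)+w)^2/2)‖ = Real.exp (-((s+w.re)^2 - w.im^2)/2) := by
  rw [Complex.norm_exp]
  congr 1
  have h : -((s:ℂ)+w)^2/2 = ((-(1:ℝ)/2 : ℝ) : ℂ) * ((s:ℂ)+w)^2 := by
    push_cast; ring
  rw [h, Complex.re_ofReal_mul, pow_two, Complex.mul_re]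
  simp [Complex.add_re, Complex.add_im]
  ring

lemma hh_exp_bound {M : ℝ} {w : ℂ} (hre : |w.re| ≤ M) (him : |w.im| ≤ M)
    {s : ℝ} (hs : 0 ≤ s) :
    ‖Complex.exp (-((s:ℂ)+w)^2/2)‖ ≤ Real.exp (3*M^2/2) * Real.exp (-(1/4) * s^2) := by
  rw [norm_hh_exp, ← Real.exp_add]
  apply Real.exp_le_exp.2
  have h1 : -M ≤ w.re := neg_le_of_abs_le hre
  have h2 : w.im^2 ≤ M^2 := sq_le_sq' (neg_le_of_abs_le him) (le_of_abs_le him)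
  have h3 : 0 ≤ s * (w.re + M) := mul_nonneg hs (by linarith)
  nlinarith [sq_nonneg (s - 2*M), sq_nonneg (s + w.re)]

lemma hh_cont (n : ℕ) (w : ℂ) :
    Continuous fun s : ℝ => Complex.exp (-((s:ℂ)+w)^2/2) * (s:ℂ)^n := by fun_prop

lemma hh_integrand_integrable (n : ℕ) (w : ℂ) :
    IntegrableOn (fun s : ℝ => Complex.exp (-((s:ℂ)+w)^2/2) * (s:ℂ)^n) (Ioi 0) := by
  set M := ‖w‖ with hM
  refine (((gaussInt n (by norm_num : (0:ℝ) < 1/4)).const_mul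
    (Real.exp (3*M^2/2))).mono' ((hh_cont n w).aestronglyMeasurable) ?_)
  filter_upwards [ae_restrict_mem measurableSet_Ioi] with s hs
  have hs0 : (0:ℝ) ≤ s := le_of_lt hs
  rw [norm_mul, norm_pow, Complex.norm_real, Real.norm_of_nonneg hs0]
  calc ‖Complex.exp (-((s:ℂ)+w)^2/2)‖ * s^n
      ≤ (Real.exp (3*M^2/2) * Real.exp (-(1/4) * s^2)) * s^n := by
        gcongr
        exact hh_exp_bound (Complex.abs_re_le_norm w) (Complex.abs_im_le_norm w) hs0
    _ = Real.exp (3*M^2/2) * (s^n * Real.exp (-(1/4) * s^2)) := by ring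

lemma hasDerivAt_hh_integrand (n : ℕ) (s : ℝ) (w : ℂ) :
    HasDerivAt (fun w : ℂ => Complex.exp (-((s:ℂ)+w)^2/2) * (s:ℂ)^n)
      (-((s:ℂ)+w) * Complex.exp (-((s:ℂ)+w)^2/2) * (s:ℂ)^n) w := by
  have h1 : HasDerivAt (fun w : ℂ => -((s:ℂ)+w)^2/2) (-((s:ℂ)+w)) w := by
    have h0 : HasDerivAt (fun w : ℂ => (s:ℂ)+w) 1 w := (hasDerivAt_id w).const_add _
    have h2 := ((h0.pow 2).neg.div_const 2)
    refine h2.congr_deriv ?_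
    ring_nf
  have h3 := h1.cexp.mul_const ((s:ℂ)^n)
  refine h3.congr_deriv ?_
  ring

lemma diffAt_hh_int (n : ℕ) (w₀ : ℂ) :
    DifferentiableAt ℂ (fun w : ℂ => ∫ s in Ioi (0:ℝ),
      Complex.exp (-((s:ℂ)+w)^2/2) * (s:ℂ)^n) w₀ := by
  set M := ‖w₀‖ + 1 with hM
  have hM1 : 0 < M := lt_of_lt_of_le one_pos (le_add_of_nonneg_left (norm_nonneg _))
  have key : ∀ w ∈ ball w₀ 1, |w.re| ≤ M ∧ |w.im| ≤ M ∧ ‖w‖ ≤ M := by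
    intro w hb
    have h2 : ‖w - w₀‖ < 1 := by rwa [mem_ball, Complex.dist_eq] at hb
    have h3 : ‖w‖ ≤ M := by
      have := norm_add_le w₀ (w - w₀)
      simp only [add_sub_cancel] at this
      rw [hM]; linarith
    exact ⟨le_trans (Complex.abs_re_le_norm w) h3, le_trans (Complex.abs_im_le_norm w) h3, h3⟩
  have main := hasDerivAt_integral_of_dominated_loc_of_deriv_le
    (μ := volume.restrict (Ioi (0:ℝ)))
    (F := fun w s => Complex.exp (-((s:ℂ)+w)^2/2) * (s:ℂ)^n)
    (F' := fun w s => -((s:ℂ)+w) * Complex.exp (-((s:ℂ)+w)^2/2) * (s:ℂ)^n)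
    (bound := fun s => Real.exp (3*M^2/2) * ((s^(n+1) + M * s^n) * Real.exp (-(1/4) * s^2)))
    (ball_mem_nhds w₀ one_pos)
    (Eventually.of_forall fun w => (hh_cont n w).aestronglyMeasurable)
    (hh_integrand_integrable n w₀)
    (by apply Continuous.aestronglyMeasurable; fun_prop)
    ?_ ?_ ?_
  · exact main.2.differentiableAt
  · filter_upwards [ae_restrict_mem measurableSet_Ioi] with s hs
    intro w hb
    obtain ⟨hre, him, habs⟩ := key w hb
    have hs0 : (0:ℝ) ≤ s := le_of_lt hs
    rw [norm_mul, norm_mul, norm_pow, Complex.norm_real, Real.norm_of_nonneg hs0]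
    have hb1 : ‖(s:ℂ)+w‖ ≤ s + M := by
      calc ‖(s:ℂ)+w‖ ≤ ‖(s:ℂ)‖ + ‖w‖ := norm_add_le _ _
        _ ≤ s + M := by
          rw [Complex.norm_real, Real.norm_of_nonneg hs0]
          linarith
    rw [norm_neg]
    calc ‖(s:ℂ)+w‖ * ‖Complex.exp (-((s:ℂ)+w)^2/2)‖ * s^n
        ≤ (s + M) * ((Real.exp (3*M^2/2) * Real.exp (-(1/4) * s^2))) * s^n := by
          gcongr <;> first
            | exact hh_exp_bound hre him hs0
            | positivity
      _ = Real.exp (3*M^2/2) * ((s^(n+1) + M * s^n) * Real.exp (-(1/4) * s^2)) := by ring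
  · apply Integrable.const_mul
    have h1 := gaussInt (n+1) (by norm_num : (0:ℝ) < 1/4)
    have h2 := (gaussInt n (by norm_num : (0:ℝ) < 1/4)).const_mul M
    refine (h1.add h2).congr (Eventually.of_forall fun s => by
      simp only [Pi.add_apply]; ring)
  · filter_upwards with s
    intro w hb
    exact hasDerivAt_hh_integrand n s w

lemma integral_Ioi_shift (f : ℝ → ℂ) (c : ℝ) :
    ∫ τ in Ioi c, f τ = ∫ u in Ioi (0:ℝ), f (u + c) := by
  have hemb : MeasurableEmbedding (fun x : ℝ => x + c) :=
    (MeasurableEquiv.addRight c).measurableEmbedding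
  have h2 := hemb.setIntegral_map (μ := volume) f (Ioi c)
  rw [map_add_right_eq_self volume c, preimage_add_const_Ioi] at h2
  simpa using h2

lemma integral_Ioi_scale (h : ℝ → ℂ) {a : ℝ} (ha : 0 < a) :
    ∫ u in Ioi (0:ℝ), h u = (a:ℂ) * ∫ s in Ioi (0:ℝ), h (a * s) := by
  rw [integral_comp_mul_left_Ioi h 0 ha, mul_zero, Complex.real_smul, ← mul_assoc,
    ← Complex.ofReal_mul, mul_inv_cancel₀ (ne_of_gt ha), Complex.ofReal_one, one_mul]

lemma hh_real_norm (n : ℕ) {w : ℝ} (hw : 0 ≤ w) {s : ℝ} (hs : 0 ≤ s) :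
    ‖Complex.exp (-((s:ℂ)+(w:ℂ))^2/2)‖ ≤ Real.exp (-(1/2) * s^2) := by
  rw [norm_hh_exp]
  simp only [Complex.ofReal_re, Complex.ofReal_im]
  apply Real.exp_le_exp.2
  nlinarith [sq_nonneg (s + w)]

lemma tendsto_pow_gauss (k : ℕ) :
    Tendsto (fun s : ℝ => s^k * Real.exp (-(1/2) * s^2)) atTop (𝓝 0) := by
  have hq : Tendsto (fun s : ℝ => s^2/2) atTop atTop := by
    apply Tendsto.atTop_div_const two_pos
    exact tendsto_pow_atTop two_ne_zero
  have h := (Real.tendsto_pow_mul_exp_neg_atTop_nhds_zero k).comp hq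
  have h2 : Tendsto (fun s : ℝ => (2:ℝ)^k * ((s^2/2)^k * Real.exp (-(s^2/2)))) atTop (𝓝 0) := by
    simpa using h.const_mul ((2:ℝ)^k)
  apply squeeze_zero_norm' _ h2
  filter_upwards [eventually_ge_atTop (1:ℝ)] with s hs
  have hs0 : (0:ℝ) ≤ s := le_trans zero_le_one hs
  rw [Real.norm_of_nonneg (by positivity)]
  have : s^k ≤ (2:ℝ)^k * (s^2/2)^k := by
    rw [← mul_pow]
    apply pow_le_pow_left₀ hs0
    nlinarith
  calc s^k * Real.exp (-(1/2) * s^2) ≤ ((2:ℝ)^k * (s^2/2)^k) * Real.exp (-(1/2) * s^2) := by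
        gcongr
    _ = (2:ℝ)^k * ((s^2/2)^k * Real.exp (-(s^2/2))) := by rw [mul_assoc]; ring_nf

lemma hasDerivAt_ofReal (s : ℝ) : HasDerivAt (fun s : ℝ => (s:ℂ)) 1 s := by
  simpa using (hasDerivAt_id s).ofReal_comp

lemma ibp_hh (n : ℕ) {w : ℝ} (hw : 0 ≤ w) :
    ∫ s in Ioi (0:ℝ), Complex.exp (-((s:ℂ)+(w:ℂ))^2/2) * ((s:ℂ)+(w:ℂ)) * (s:ℂ)^(n+1)
      = ((n:ℂ)+1) * ∫ s in Ioi (0:ℝ), Complex.exp (-((s:ℂ)+(w:ℂ))^2/2) * (s:ℂ)^n := by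
  set A : ℝ → ℂ := fun s => Complex.exp (-((s:ℂ)+(w:ℂ))^2/2) * ((s:ℂ)+(w:ℂ)) * (s:ℂ)^(n+1)
    with hA
  set B : ℝ → ℂ := fun s => Complex.exp (-((s:ℂ)+(w:ℂ))^2/2) * (s:ℂ)^n with hB
  have hAint : IntegrableOn A (Ioi 0) := by
    have hg1 := gaussInt (n+2) (by norm_num : (0:ℝ) < 1/2)
    have hg2 := (gaussInt (n+1) (by norm_num : (0:ℝ) < 1/2)).const_mul w
    refine ((hg1.add hg2).mono' ?_ ?_)
    · apply Continuous.aestronglyMeasurable; fun_prop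
    · filter_upwards [ae_restrict_mem measurableSet_Ioi] with s hs
      have hs0 : (0:ℝ) ≤ s := le_of_lt hs
      rw [hA]
      simp only [Pi.add_apply]
      rw [norm_mul, norm_mul, norm_pow, Complex.norm_real, Real.norm_of_nonneg hs0]
      have h1 : ‖(s:ℂ)+(w:ℂ)‖ = s + w := by
        rw [← Complex.ofReal_add, Complex.norm_real, Real.norm_of_nonneg (by linarith)]
      rw [h1]
      calc ‖Complex.exp (-((s:ℂ)+(w:ℂ))^2/2)‖ * (s + w) * s^(n+1)
          ≤ Real.exp (-(1/2) * s^2) * (s + w) * s^(n+1) := by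
            gcongr
            exact hh_real_norm n hw hs0
        _ = s^(n+2) * Real.exp (-(1/2)*s^2) + w * (s^(n+1) * Real.exp (-(1/2)*s^2)) := by ring
  have hBint : IntegrableOn B (Ioi 0) := hh_integrand_integrable n (w:ℂ)
  set G : ℝ → ℂ := fun s => -Complex.exp (-((s:ℂ)+(w:ℂ))^2/2) * (s:ℂ)^(n+1) with hG
  have hC : ∀ u : ℂ, HasDerivAt (fun u : ℂ => -Complex.exp (-(u+(w:ℂ))^2/2) * u^(n+1))
      (Complex.exp (-(u+(w:ℂ))^2/2) * (u+(w:ℂ)) * u^(n+1)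
        - ((n:ℂ)+1) * (Complex.exp (-(u+(w:ℂ))^2/2) * u^n)) u := by
    intro u
    have h1 : HasDerivAt (fun u : ℂ => -(u+(w:ℂ))^2/2) (-(u+(w:ℂ))) u := by
      have h0 := (((hasDerivAt_id u).add_const ((w:ℂ))).pow 2).neg.div_const 2
      refine h0.congr_deriv ?_
      simp
      ring
    have h2 := h1.cexp.neg.mul ((hasDerivAt_id u).pow (n+1))
    refine h2.congr_deriv ?_
    simp only [id_eq, Nat.add_sub_cancel, Pi.pow_apply, Pi.neg_apply]
    push_cast
    ring
  have hderiv : ∀ s ∈ Ici (0:ℝ), HasDerivAt G (A s - ((n:ℂ)+1) * B s) s := by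
    intro s _
    exact (hC (s:ℂ)).comp_ofReal
  have htend : Tendsto G atTop (𝓝 0) := by
    apply squeeze_zero_norm' _ (tendsto_pow_gauss (n+1))
    filter_upwards [eventually_ge_atTop (0:ℝ)] with s hs0
    rw [hG]
    simp only
    rw [norm_mul, norm_neg, norm_pow, Complex.norm_real, Real.norm_of_nonneg hs0]
    calc ‖Complex.exp (-((s:ℂ)+(w:ℂ))^2/2)‖ * s^(n+1)
        ≤ Real.exp (-(1/2) * s^2) * s^(n+1) := by gcongr; exact hh_real_norm n hw hs0
      _ = s^(n+1) * Real.exp (-(1/2) * s^2) := by ring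
  have hint : IntegrableOn (fun s => A s - ((n:ℂ)+1) * B s) (Ioi 0) :=
    hAint.sub (hBint.const_mul _)
  have h0 := integral_Ioi_of_hasDerivAt_of_tendsto' hderiv hint htend
  have hG0 : G 0 = 0 := by simp [hG]
  rw [hG0, sub_zero] at h0
  have hsub := integral_sub hAint (hBint.const_mul ((n:ℂ)+1))
  rw [h0] at hsub
  have heq := integral_const_mul (μ := volume.restrict (Ioi (0:ℝ))) ((n:ℂ)+1) B
  rw [heq] at hsub
  linear_combination -hsub

lemma real_axis_eq (n : ℕ) (c : ℝ) (hc : 0 ≤ c) {t : ℝ} (ht : 0 < t) :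
    phiC n c (t:ℂ)
      = (((2 : ℝ) ^ (((n : ℝ) + 1) / 2) / Real.sqrt Real.pi : ℝ) : ℂ) *
          (t:ℂ) ^ ((n : ℂ) / 2) * Hh n ((c : ℂ) / (2 * (t:ℂ)) ^ (1 / 2 : ℂ)) := by
  obtain ⟨a, hadef⟩ : ∃ a, a = Real.sqrt (2*t) := ⟨_, rfl⟩
  have h2t : (0:ℝ) < 2*t := by linarith
  have ha0 : 0 < a := hadef ▸ Real.sqrt_pos.2 h2t
  have ha2 : a^2 = 2*t := hadef ▸ Real.sq_sqrt h2t.le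
  obtain ⟨w, hwdef⟩ : ∃ w, w = c / a := ⟨_, rfl⟩
  have hw0 : 0 ≤ w := by rw [hwdef]; exact div_nonneg hc ha0.le
  -- the cpow square root is a
  have hsq : ((2:ℂ) * (t:ℂ)) ^ (1/2 : ℂ) = (a:ℂ) := by
    have h1 : (2:ℂ) * (t:ℂ) = ((2*t : ℝ) : ℂ) := by push_cast; ring
    have h2 : ((2*t : ℝ) : ℂ) ^ ((1/2 : ℝ) : ℂ) = (((2*t) ^ (1/2:ℝ) : ℝ) : ℂ) :=
      (Complex.ofReal_cpow h2t.le _).symm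
    rw [h1]
    have h3 : ((1/2 : ℝ) : ℂ) = (1/2 : ℂ) := by norm_num
    rw [← h3, h2, ← Real.sqrt_eq_rpow, hadef]
  have hw : (c : ℂ) / (2 * (t:ℂ)) ^ (1 / 2 : ℂ) = ((w : ℝ) : ℂ) := by
    rw [hsq, hwdef]
    push_cast
    ring
  -- transform the integral
  have hstep : (∫ τ in Ioi c, Complex.exp (-(τ:ℂ)^2/(4*(t:ℂ))) * (τ:ℂ) * ((τ:ℂ)-(c:ℂ))^(n+1))
      = (a:ℂ)^(n+3) * ((n:ℂ)+1)
        * ∫ s in Ioi (0:ℝ), Complex.exp (-((s:ℂ)+(w:ℂ))^2/2) * (s:ℂ)^n := by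
    rw [integral_Ioi_shift (fun τ : ℝ => Complex.exp (-(τ:ℂ)^2/(4*(t:ℂ))) * (τ:ℂ) * ((τ:ℂ)-(c:ℂ))^(n+1)) c]
    rw [integral_Ioi_scale _ ha0]
    have hpt : ∀ s : ℝ,
        Complex.exp (-((a*s+c:ℝ):ℂ)^2/(4*(t:ℂ))) * ((a*s+c:ℝ):ℂ) * (((a*s+c:ℝ):ℂ)-(c:ℂ))^(n+1)
        = (a:ℂ)^(n+2) * (Complex.exp (-((s:ℂ)+(w:ℂ))^2/2) * ((s:ℂ)+(w:ℂ)) * (s:ℂ)^(n+1)) := by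
      intro s
      have hexp : -((a*s+c:ℝ):ℂ)^2/(4*(t:ℂ)) = -((s:ℂ)+(w:ℂ))^2/2 := by
        have hre : (a*s+c)^2/(4*t) = (s+w)^2/2 := by
          rw [hwdef]
          field_simp
          nlinarith [ha2]
        have h := congrArg (fun x : ℝ => ((-x : ℝ) : ℂ)) hre
        push_cast at h ⊢
        linear_combination h
      have hane : (a:ℂ) ≠ 0 := Complex.ofReal_ne_zero.2 (ne_of_gt ha0)
      have hca : (c:ℂ) = (a:ℂ)*(w:ℂ) := by
        rw [hwdef]
        push_cast
        field_simp
      rw [hexp]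
      push_cast
      linear_combination (Complex.exp (-((s:ℂ)+(w:ℂ))^2/2) * (a:ℂ)^(n+1) * (s:ℂ)^(n+1)) * hca
    have hpt' : ∀ s : ℝ, Complex.exp (-(((a*s:ℝ)+c:ℝ):ℂ)^2/(4*(t:ℂ))) * (((a*s:ℝ)+c:ℝ):ℂ)
        * ((((a*s:ℝ)+c:ℝ):ℂ)-(c:ℂ))^(n+1)
        = (a:ℂ)^(n+2) * (Complex.exp (-((s:ℂ)+(w:ℂ))^2/2) * ((s:ℂ)+(w:ℂ)) * (s:ℂ)^(n+1)) :=
      fun s => hpt s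
    calc (a:ℂ) * ∫ s in Ioi (0:ℝ), Complex.exp (-(((a*s:ℝ)+c:ℝ):ℂ)^2/(4*(t:ℂ)))
            * (((a*s:ℝ)+c:ℝ):ℂ) * ((((a*s:ℝ)+c:ℝ):ℂ)-(c:ℂ))^(n+1)
        = (a:ℂ) * ∫ s in Ioi (0:ℝ), (a:ℂ)^(n+2)
            * (Complex.exp (-((s:ℂ)+(w:ℂ))^2/2) * ((s:ℂ)+(w:ℂ)) * (s:ℂ)^(n+1)) := by
          congr 1
          exact setIntegral_congr_fun measurableSet_Ioi (fun s _ => hpt' s)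
      _ = (a:ℂ)^(n+3) * ∫ s in Ioi (0:ℝ),
            Complex.exp (-((s:ℂ)+(w:ℂ))^2/2) * ((s:ℂ)+(w:ℂ)) * (s:ℂ)^(n+1) := by
          rw [integral_const_mul]
          ring
      _ = (a:ℂ)^(n+3) * (((n:ℂ)+1)
            * ∫ s in Ioi (0:ℝ), Complex.exp (-((s:ℂ)+(w:ℂ))^2/2) * (s:ℂ)^n) := by
          rw [ibp_hh n hw0]
      _ = _ := by ring
  -- scalar arithmetic
  have hpine : (Real.sqrt Real.pi : ℂ) ≠ 0 :=
    Complex.ofReal_ne_zero.2 (ne_of_gt (Real.sqrt_pos.2 Real.pi_pos))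
  have hprod : (t:ℂ)^(-(3:ℂ)/2) * (a:ℂ)^(n+3)
      = 2 * (((2:ℝ)^(((n:ℝ)+1)/2) : ℝ) : ℂ) * (t:ℂ)^((n:ℂ)/2) := by
    have h1 : (t:ℂ)^(-(3:ℂ)/2) = ((t ^ (-(3:ℝ)/2) : ℝ) : ℂ) := by
      rw [Complex.ofReal_cpow ht.le]
      norm_num
    have h2 : (t:ℂ)^((n:ℂ)/2) = ((t ^ ((n:ℝ)/2) : ℝ) : ℂ) := by
      rw [Complex.ofReal_cpow ht.le]
      push_cast
      norm_num
    have h3 : (a:ℂ)^(n+3) = ((a^(n+3) : ℝ) : ℂ) := by push_cast; ring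
    rw [h1, h2, h3, ← Complex.ofReal_ofNat 2, ← Complex.ofReal_mul, ← Complex.ofReal_mul,
      ← Complex.ofReal_mul]
    congr 1
    have ha' : a^(n+3) = (2*t) ^ (((n:ℝ)+3)/2) := by
      rw [hadef, Real.sqrt_eq_rpow, ← Real.rpow_natCast ((2*t) ^ (1/(2:ℝ))) (n+3),
        ← Real.rpow_mul h2t.le]
      congr 1
      push_cast
      ring
    rw [ha', Real.mul_rpow (by norm_num : (0:ℝ) ≤ 2) ht.le]
    have e1 : t ^ (-(3:ℝ)/2) * t ^ (((n:ℝ)+3)/2) = t ^ ((n:ℝ)/2) := by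
      rw [← Real.rpow_add ht]
      congr 1
      ring
    have e2 : (2:ℝ) ^ (((n:ℝ)+3)/2) = 2 * 2 ^ (((n:ℝ)+1)/2) := by
      rw [show ((n:ℝ)+3)/2 = 1 + ((n:ℝ)+1)/2 by ring, Real.rpow_add (by norm_num),
        Real.rpow_one]
    calc t ^ (-(3:ℝ)/2) * (2 ^ (((n:ℝ)+3)/2) * t ^ (((n:ℝ)+3)/2))
        = 2 ^ (((n:ℝ)+3)/2) * (t ^ (-(3:ℝ)/2) * t ^ (((n:ℝ)+3)/2)) := by ring
      _ = 2 * 2 ^ (((n:ℝ)+1)/2) * t ^ ((n:ℝ)/2) := by rw [e1, e2]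
  -- final assembly
  have hfact : ((n+1).factorial : ℂ) = ((n:ℂ)+1) * (n.factorial : ℂ) := by
    rw [Nat.factorial_succ]
    push_cast
    ring
  have hfn : ((n.factorial : ℕ) : ℂ) ≠ 0 := Nat.cast_ne_zero.2 (Nat.factorial_ne_zero n)
  have hn1 : ((n:ℂ)+1) ≠ 0 := Nat.cast_add_one_ne_zero n
  rw [phiC, Hh, hw, hstep, hfact, Complex.ofReal_div]
  set J := ∫ s in Ioi (0:ℝ), Complex.exp (-((s:ℂ)+(w:ℂ))^2/2) * (s:ℂ)^n with hJ
  field_simp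
  rw [neg_div] at hprod
  linear_combination J * hprod

/-- `z ↦ φ_n(z;c)` is analytic on the open right half-plane, where it equals
`(2^{(n+1)/2} z^{n/2}/√π) · Hh_n(c/√(2z))` (principal branches). -/
theorem phiC_analytic_and_Hh_formula (n : ℕ) (c : ℝ) (hc : 0 ≤ c) :
    DifferentiableOn ℂ (phiC n c) {z : ℂ | 0 < z.re} ∧
    ∀ z : ℂ, 0 < z.re →
      phiC n c z
        = (((2 : ℝ) ^ (((n : ℝ) + 1) / 2) / Real.sqrt Real.pi : ℝ) : ℂ) *
            z ^ ((n : ℂ) / 2) * Hh n ((c : ℂ) / (2 * z) ^ (1 / 2 : ℂ)) := by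
  set U : Set ℂ := {z : ℂ | 0 < z.re} with hU
  have hUopen : IsOpen U := isOpen_lt continuous_const Complex.continuous_re
  -- differentiability of phiC on U
  have hphi : DifferentiableOn ℂ (phiC n c) U := by
    intro z₀ hz₀
    have hz : 0 < z₀.re := hz₀
    have h1 : DifferentiableAt ℂ (fun z : ℂ => z ^ (-(3:ℂ)/2)) z₀ :=
      ((hasDerivAt_id z₀).cpow_const (Complex.mem_slitPlane_iff.2 (Or.inl hz))).differentiableAt
    have h2 := (diffAt_phi_int n c hc hz).differentiableAt
    have h3 : DifferentiableAt ℂ (phiC n c) z₀ := by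
      have : phiC n c = fun z : ℂ =>
          z ^ (-(3:ℂ)/2) / (2 * (Real.sqrt Real.pi : ℂ) * (Nat.factorial (n + 1) : ℂ)) *
            ∫ τ in Ioi c, Complex.exp (-(τ:ℂ)^2/(4*z)) * τ * ((τ:ℂ)-c)^(n+1) := rfl
      rw [this]
      exact (h1.div_const _).mul h2
    exact h3.differentiableWithinAt
  -- differentiability of the RHS on U
  set ψ : ℂ → ℂ := fun z =>
    (((2 : ℝ) ^ (((n : ℝ) + 1) / 2) / Real.sqrt Real.pi : ℝ) : ℂ) *
      z ^ ((n : ℂ) / 2) * Hh n ((c : ℂ) / (2 * z) ^ (1 / 2 : ℂ)) with hψ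
  have hψdiff : DifferentiableOn ℂ ψ U := by
    intro z₀ hz₀
    have hz : 0 < z₀.re := hz₀
    have hz0 : z₀ ≠ 0 := fun h => by simp [h] at hz
    have hs2 : (2 * z₀) ∈ Complex.slitPlane := by
      apply Complex.mem_slitPlane_iff.2
      left
      simp [Complex.mul_re]
      linarith
    have hpow : DifferentiableAt ℂ (fun z : ℂ => (2*z) ^ (1/2 : ℂ)) z₀ :=
      (((hasDerivAt_id z₀).const_mul 2).cpow_const hs2).differentiableAt
    have hne : (2*z₀) ^ (1/2 : ℂ) ≠ 0 := by
      simp only [ne_eq, Complex.cpow_eq_zero_iff, not_and_or]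
      left
      exact mul_ne_zero two_ne_zero hz0
    have hdiv : DifferentiableAt ℂ (fun z : ℂ => (c:ℂ) / (2*z) ^ (1/2 : ℂ)) z₀ :=
      (differentiableAt_const _).div hpow hne
    have hHh : DifferentiableAt ℂ (Hh n) ((c:ℂ) / (2*z₀) ^ (1/2 : ℂ)) := by
      have : Hh n = fun w : ℂ => (1 / (Nat.factorial n : ℂ)) *
          ∫ s in Ioi (0:ℝ), Complex.exp (-((s:ℂ)+w)^2/2) * (s:ℂ)^n := rfl
      rw [this]
      exact (diffAt_hh_int n _).const_mul _
    have hcomp : DifferentiableAt ℂ (fun z : ℂ => Hh n ((c:ℂ) / (2*z) ^ (1/2 : ℂ))) z₀ :=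
      DifferentiableAt.comp (g := Hh n) z₀ hHh hdiv
    have hzpow : DifferentiableAt ℂ (fun z : ℂ => z ^ ((n:ℂ)/2)) z₀ :=
      ((hasDerivAt_id z₀).cpow_const (Complex.mem_slitPlane_iff.2 (Or.inl hz))).differentiableAt
    exact (((differentiableAt_const _).mul hzpow).mul hcomp).differentiableWithinAt
  refine ⟨hphi, ?_⟩
  -- identity theorem
  have hconn : IsPreconnected U := (convex_halfSpace_re_gt 0).isPreconnected
  have hφa : AnalyticOnNhd ℂ (phiC n c) U := hphi.analyticOnNhd hUopen
  have hψa : AnalyticOnNhd ℂ ψ U := hψdiff.analyticOnNhd hUopen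
  have h1U : (1:ℂ) ∈ U := by simp [hU]
  have hseq : Tendsto (fun k : ℕ => (((1 + 1/((k:ℝ)+1) : ℝ)) : ℂ)) atTop (𝓝[≠] (1:ℂ)) := by
    apply tendsto_nhdsWithin_of_tendsto_nhds_of_eventually_within
    · have h0 : Tendsto (fun k : ℕ => 1/((k:ℝ)+1)) atTop (𝓝 0) :=
        tendsto_one_div_add_atTop_nhds_zero_nat
      have h1 : Tendsto (fun k : ℕ => (1 + 1/((k:ℝ)+1) : ℝ)) atTop (𝓝 1) := by
        simpa using tendsto_const_nhds.add h0
      have h2 := (Complex.continuous_ofReal.tendsto 1).comp h1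
      simpa [Function.comp_def] using h2
    · filter_upwards with k
      simp only [mem_compl_iff, mem_singleton_iff]
      intro h
      have : (1 + 1/((k:ℝ)+1) : ℝ) = 1 := by exact_mod_cast h
      have hk : (0:ℝ) < 1/((k:ℝ)+1) := by positivity
      linarith
  have hfreq : ∃ᶠ z in 𝓝[≠] (1:ℂ), phiC n c z = ψ z := by
    apply hseq.frequently
    apply Frequently.of_forall
    intro k
    have ht : (0:ℝ) < 1 + 1/((k:ℝ)+1) := by positivity
    exact real_axis_eq n c hc ht
  have heq := hφa.eqOn_of_preconnected_of_frequently_eq hψa hconn h1U hfreq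
  intro z hz
  exact heq hz
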